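/- Let ρ be a finite positive Borel measure on the unit circle 𝕋 and t > 1. For θ ∈ [−π,π], set G(r,θ) = ((r²−1)/log r)·∫_𝕋 dρ(ζ)/|ζ − re^{iθ}|² for 0 < r < 1. Then: (i) the set {r ∈ (0,1) : G(r,θ) < 1/(t−1)} is nonempty, and its supremum R_t(θ) satisfies 0 < R_t(θ) ≤ 1; (ii) R_t(θ) < 1 if and only if g(θ) > 1/(t−1), where g(θ) = 2∫_𝕋 dρ(ζ)/|ζ − e^{iθ}|² ∈ [0,∞]; (iii) if R_t(θ) < 1 then G(R_t(θ),θ) = 1/(t−1). -/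

import Mathlib

open MeasureTheory Filter ENNReal

/-- G(r,θ) = ((r²−1)/log r)·∫_𝕋 dρ(ζ)/|ζ − re^{iθ}|². -/
noncomputable def GT (ρ : Measure ℂ) (r θ : ℝ) : ℝ :=
  ((r ^ 2 - 1) / Real.log r) *
    ∫ ζ : ℂ, 1 / ‖ζ - (r : ℂ) * Complex.exp ((θ : ℂ) * Complex.I)‖ ^ 2 ∂ρ

/-- R_t(θ) = sup{r ∈ (0,1) : G(r,θ) < 1/(t−1)}. -/
noncomputable def RT (ρ : Measure ℂ) (t θ : ℝ) : ℝ :=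
  sSup {r : ℝ | r ∈ Set.Ioo (0 : ℝ) 1 ∧ GT ρ r θ < 1 / (t - 1)}

/-- g(θ) = 2∫_𝕋 dρ(ζ)/|ζ − e^{iθ}|², with values in [0,∞]. -/
noncomputable def gT (ρ : Measure ℂ) (θ : ℝ) : ℝ≥0∞ :=
  2 * ∫⁻ ζ : ℂ, (ENNReal.ofReal (‖ζ - Complex.exp ((θ : ℂ) * Complex.I)‖ ^ 2))⁻¹ ∂ρ

set_option linter.unusedSectionVars false
set_option linter.unusedVariables false
set_option maxHeartbeats 1000000

open Set in
lemma LG16.log_ineq {r : ℝ} (h0 : 0 < r) (h1 : r < 1) :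
    2 * (1 - r) / (1 + r) < -Real.log r := by
  set g : ℝ → ℝ := fun x => 2 - Real.log x - 4 / (1 + x) with hg
  have hderiv : ∀ x ∈ Set.Ioo r 1, HasDerivAt g (-(1/x) + 4 / (1 + x) ^ 2) x := by
    intro x hx
    have hx0 : (0:ℝ) < x := h0.trans hx.1
    have h1x : (1:ℝ) + x ≠ 0 := by nlinarith [hx.1]
    have d1 : HasDerivAt (fun x : ℝ => Real.log x) (1/x) x := by
      simpa [one_div] using Real.hasDerivAt_log hx0.ne'
    have d2 : HasDerivAt (fun x : ℝ => (1:ℝ) + x) 1 x := (hasDerivAt_id x).const_add 1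
    have d3 : HasDerivAt (fun x : ℝ => ((1:ℝ) + x)⁻¹) (-1 / (1 + x) ^ 2) x := by
      exact d2.inv h1x
    have d4 : HasDerivAt (fun x : ℝ => 4 / (1 + x)) (4 * (-1 / (1 + x) ^ 2)) x := by
      simpa [div_eq_mul_inv] using d3.const_mul 4
    have := ((hasDerivAt_const x (2:ℝ)).sub d1).sub d4
    rw [show -(1/x) + 4 / (1 + x) ^ 2 = 0 - 1/x - 4 * (-1 / (1 + x) ^ 2) by ring]
    exact this
  have hanti : StrictAntiOn g (Set.Icc r 1) := by
    apply strictAntiOn_of_deriv_neg (convex_Icc r 1)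
    · apply ContinuousOn.sub (ContinuousOn.sub continuousOn_const ?_) ?_
      · exact Real.continuousOn_log.mono (fun x hx => by
          simp only [mem_compl_iff, mem_singleton_iff]; exact (h0.trans_le hx.1).ne')
      · exact continuousOn_const.div (by fun_prop) (fun x hx => by nlinarith [hx.1])
    · intro x hx
      rw [interior_Icc] at hx
      rw [(hderiv x hx).deriv]
      have hx0 : (0:ℝ) < x := h0.trans hx.1
      have : 4 * x < (1 + x)^2 := by nlinarith [hx.2]
      rw [neg_add_lt_iff_lt_add, add_zero, div_lt_div_iff₀ (by positivity) hx0]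
      nlinarith
  have := hanti (Set.left_mem_Icc.2 h1.le) (Set.right_mem_Icc.2 h1.le) h1
  have hg1 : g 1 = 0 := by norm_num [hg]
  rw [hg1] at this
  have h1r : (0:ℝ) < 1 + r := by linarith
  have : 4 / (1 + r) < 2 - Real.log r := by simp only [hg] at this; linarith
  rw [div_lt_iff₀ h1r] at *
  nlinarith [this]

namespace LG16

lemma A_pos {r : ℝ} (h0 : 0 < r) (h1 : r < 1) : 0 < (r^2 - 1) / Real.log r :=
  div_pos_of_neg_of_neg (by nlinarith) (Real.log_neg h0 h1)

lemma A_lt {r : ℝ} (h0 : 0 < r) (h1 : r < 1) :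
    (r^2 - 1) / Real.log r < (1 + r)^2 / 2 := by
  have hl : 2 * (1 - r) / (1 + r) < -Real.log r := log_ineq h0 h1
  have hlog : Real.log r < 0 := Real.log_neg h0 h1
  rw [div_lt_iff_of_neg hlog]
  have h2 : Real.log r < -(2 * (1 - r) / (1 + r)) := by linarith
  calc (1 + r)^2/2 * Real.log r < (1 + r)^2/2 * (-(2 * (1 - r) / (1 + r))) :=
        mul_lt_mul_of_pos_left h2 (by positivity)
    _ = r^2 - 1 := by field_simp; ring

lemma sq_abs_sub {r θ : ℝ} (ζ : ℂ) (hζ : ‖ζ‖ = 1) :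
    ‖ζ - (r:ℂ) * Complex.exp ((θ:ℂ) * Complex.I)‖ ^ 2
      = 1 - 2*r*((ζ * (starRingEnd ℂ) (Complex.exp ((θ:ℂ) * Complex.I))).re) + r^2 := by
  set e := Complex.exp ((θ:ℂ) * Complex.I) with he
  have habse : ‖e‖ = 1 := Complex.norm_exp_ofReal_mul_I θ
  have h1 : Complex.normSq ζ = 1 := by
    rw [← Complex.sq_norm, hζ]; norm_num
  have h2 : Complex.normSq e = 1 := by
    rw [← Complex.sq_norm, habse]; norm_num
  rw [Complex.sq_norm, Complex.normSq_sub, h1]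
  rw [Complex.normSq_mul, Complex.normSq_ofReal, h2]
  have : (ζ * (starRingEnd ℂ) (↑r * e)).re
      = r * (ζ * (starRingEnd ℂ) e).re := by
    rw [map_mul, Complex.conj_ofReal]
    rw [show ζ * (↑r * (starRingEnd ℂ) e) = ↑r * (ζ * (starRingEnd ℂ) e) by ring]
    simp [Complex.mul_re]
  rw [this]; ring

lemma pointwise_lt {r θ : ℝ} (h0 : 0 < r) (h1 : r < 1) (ζ : ℂ) (hζ : ‖ζ‖ = 1) :
    ENNReal.ofReal ((r^2 - 1) / Real.log r *
        (1 / ‖ζ - (r:ℂ) * Complex.exp ((θ:ℂ) * Complex.I)‖ ^ 2))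
      < 2 * (ENNReal.ofReal (‖ζ - Complex.exp ((θ:ℂ) * Complex.I)‖ ^ 2))⁻¹ := by
  set x : ℝ := (ζ * (starRingEnd ℂ) (Complex.exp ((θ:ℂ) * Complex.I))).re with hx
  have hxle : |x| ≤ 1 := by
    calc |x| ≤ ‖ζ * (starRingEnd ℂ) (Complex.exp ((θ:ℂ) * Complex.I))‖ :=
          Complex.abs_re_le_norm _
      _ = 1 := by
          rw [norm_mul, Complex.norm_conj, Complex.norm_exp_ofReal_mul_I, hζ, one_mul]
  have hx1 : -1 ≤ x := (abs_le.1 hxle).1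
  have hx2 : x ≤ 1 := (abs_le.1 hxle).2
  have hd : ‖ζ - (r:ℂ) * Complex.exp ((θ:ℂ) * Complex.I)‖ ^ 2
      = 1 - 2*r*x + r^2 := sq_abs_sub ζ hζ
  have hs : ‖ζ - Complex.exp ((θ:ℂ) * Complex.I)‖ ^ 2 = 2 - 2*x := by
    have h := sq_abs_sub (r := 1) (θ := θ) ζ hζ
    rw [Complex.ofReal_one, one_mul] at h
    rw [h, ← hx]; ring
  have hdpos : (0:ℝ) < 1 - 2*r*x + r^2 := by nlinarith
  have hA : 0 < (r^2 - 1) / Real.log r := A_pos h0 h1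
  have hA2 : (r^2 - 1) / Real.log r < (1 + r)^2 / 2 := A_lt h0 h1
  rw [hd, hs]
  rcases eq_or_lt_of_le hx2 with hx2' | hx2'
  · have : (2:ℝ) - 2*x = 0 := by rw [hx2']; ring
    rw [this, ENNReal.ofReal_zero, ENNReal.inv_zero, ENNReal.mul_top (by norm_num)]
    exact ENNReal.ofReal_lt_top
  · have hspos : (0:ℝ) < 2 - 2*x := by linarith
    rw [← ENNReal.ofReal_inv_of_pos hspos, ← ENNReal.ofReal_ofNat 2,
      ← ENNReal.ofReal_mul (by norm_num)]
    rw [ENNReal.ofReal_lt_ofReal_iff (by positivity)]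
    rw [one_div, ← div_eq_mul_inv, ← div_eq_mul_inv, div_lt_div_iff₀ hdpos hspos]
    nlinarith [mul_lt_mul_of_pos_right hA2 hspos,
      mul_nonneg (sq_nonneg (1 - r)) (by linarith : (0:ℝ) ≤ 1 + x)]

variable {ρ : Measure ℂ} [IsFiniteMeasure ρ] {r θ : ℝ}

lemma ae_circle (hρ : ρ {z : ℂ | ‖z‖ = 1}ᶜ = 0) :
    ∀ᵐ ζ ∂ρ, ‖ζ‖ = 1 := hρ

lemma meas_f (w : ℂ) : Measurable (fun ζ : ℂ => 1 / ‖ζ - w‖ ^ 2) := by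
  have h : Continuous (fun ζ : ℂ => ‖ζ - w‖ ^ 2) :=
    (continuous_norm.comp (continuous_id.sub continuous_const)).pow 2
  have h2 : Measurable fun ζ : ℂ => (‖ζ - w‖ ^ 2)⁻¹ := h.measurable.inv
  simpa [one_div] using h2

lemma abs_ge (h1 : r < 1) (hr : 0 ≤ r) (ζ : ℂ) (hζ : ‖ζ‖ = 1) :
    1 - r ≤ ‖ζ - (r : ℂ) * Complex.exp ((θ : ℂ) * Complex.I)‖ := by
  have h := norm_sub_norm_le ζ ((r : ℂ) * Complex.exp ((θ : ℂ) * Complex.I))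
  rw [norm_mul, Complex.norm_exp_ofReal_mul_I, mul_one, Complex.norm_real, Real.norm_eq_abs,
    abs_of_nonneg hr, hζ] at h
  exact h

lemma f_le (h0 : 0 < r) (h1 : r < 1) (ζ : ℂ) (hζ : ‖ζ‖ = 1) :
    1 / ‖ζ - (r : ℂ) * Complex.exp ((θ : ℂ) * Complex.I)‖ ^ 2
      ≤ ((1 - r) ^ 2)⁻¹ := by
  rw [one_div]
  apply inv_anti₀ (pow_pos (by linarith : (0:ℝ) < 1 - r) 2)
  have := abs_ge h1 h0.le ζ hζ (θ := θ)
  nlinarith [norm_nonneg (ζ - (r : ℂ) * Complex.exp ((θ : ℂ) * Complex.I))]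

lemma integrable_f (hρ : ρ {z : ℂ | ‖z‖ = 1}ᶜ = 0) (h0 : 0 < r) (h1 : r < 1) :
    Integrable (fun ζ : ℂ => 1 / ‖ζ - (r : ℂ) * Complex.exp ((θ : ℂ) * Complex.I)‖ ^ 2) ρ := by
  apply Integrable.mono' (integrable_const (((1 - r) ^ 2)⁻¹))
    (meas_f _).aestronglyMeasurable
  filter_upwards [ae_circle hρ] with ζ hζ
  rw [Real.norm_eq_abs, abs_of_nonneg (by positivity)]
  exact f_le h0 h1 ζ hζ

lemma GT_nonneg (h0 : 0 < r) (h1 : r < 1) : 0 ≤ GT ρ r θ := by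
  apply mul_nonneg (le_of_lt (div_pos_of_neg_of_neg (by nlinarith) (Real.log_neg h0 h1)))
  exact integral_nonneg (fun ζ => by positivity)

lemma ofReal_GT (hρ : ρ {z : ℂ | ‖z‖ = 1}ᶜ = 0) (h0 : 0 < r) (h1 : r < 1) :
    ENNReal.ofReal (GT ρ r θ)
      = ∫⁻ ζ, ENNReal.ofReal ((r ^ 2 - 1) / Real.log r *
          (1 / ‖ζ - (r : ℂ) * Complex.exp ((θ : ℂ) * Complex.I)‖ ^ 2)) ∂ρ := by
  rw [GT, ← integral_const_mul]
  exact ofReal_integral_eq_lintegral_ofReal ((integrable_f hρ h0 h1).const_mul _)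
    (Eventually.of_forall fun ζ => by
      have hA := le_of_lt (div_pos_of_neg_of_neg (by nlinarith : r^2-1 < 0) (Real.log_neg h0 h1))
      positivity)

lemma tendsto_A : Tendsto (fun r : ℝ => (r ^ 2 - 1) / Real.log r)
    (nhdsWithin 1 {(1:ℝ)}ᶜ) (nhds 2) := by
  have h := Real.hasDerivAt_log one_ne_zero
  rw [hasDerivAt_iff_tendsto_slope] at h
  have h2 : Tendsto (fun r : ℝ => (r - 1) / Real.log r) (nhdsWithin 1 {(1:ℝ)}ᶜ) (nhds 1) := by
    have h3 := h.inv₀ (by norm_num)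
    simp only [inv_one] at h3
    apply h3.congr
    intro r
    simp [slope_def_field, Real.log_one, inv_div]
  have h4 : Tendsto (fun r : ℝ => (r + 1) * ((r - 1) / Real.log r))
      (nhdsWithin 1 {(1:ℝ)}ᶜ) (nhds 2) := by
    have h5 : Tendsto (fun r : ℝ => r + 1) (nhdsWithin 1 {(1:ℝ)}ᶜ) (nhds 2) := by
      apply Tendsto.mono_left _ nhdsWithin_le_nhds
      have : Tendsto (fun r : ℝ => r + 1) (nhds 1) (nhds (1 + 1)) :=
        (continuous_id.add continuous_const).tendsto (1:ℝ)
      norm_num at this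
      exact this
    simpa using h5.mul h2
  apply h4.congr
  intro r
  field_simp
  ring

lemma meas_gint : Measurable (fun ζ : ℂ =>
    (ENNReal.ofReal (‖ζ - Complex.exp ((θ : ℂ) * Complex.I)‖ ^ 2))⁻¹) := by
  have h : Continuous (fun ζ : ℂ => ‖ζ - Complex.exp ((θ : ℂ) * Complex.I)‖ ^ 2) :=
    (continuous_norm.comp (continuous_id.sub continuous_const)).pow 2
  exact h.measurable.ennreal_ofReal.inv

lemma gT_eq : gT ρ θ = ∫⁻ ζ, 2 *
    (ENNReal.ofReal (‖ζ - Complex.exp ((θ : ℂ) * Complex.I)‖ ^ 2))⁻¹ ∂ρ := by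
  rw [gT, lintegral_const_mul _ meas_gint]

lemma Glt (hρ : ρ {z : ℂ | ‖z‖ = 1}ᶜ = 0) {c : ℝ} (hc : 0 < c)
    (hg : gT ρ θ ≤ ENNReal.ofReal c) (h0 : 0 < r) (h1 : r < 1) :
    GT ρ r θ < c := by
  rcases eq_or_ne ρ 0 with hz | hz
  · subst hz
    simp only [GT, integral_zero_measure, mul_zero]
    exact hc
  · have hlt : ENNReal.ofReal (GT ρ r θ) < gT ρ θ := by
      rw [ofReal_GT hρ h0 h1, gT_eq]
      apply lintegral_strict_mono hz (meas_gint.const_mul 2).aemeasurable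
      · rw [← ofReal_GT hρ h0 h1]
        exact ENNReal.ofReal_ne_top
      · filter_upwards [ae_circle hρ] with ζ hζ
        exact pointwise_lt h0 h1 ζ hζ
    have := hlt.trans_le hg
    exact (ENNReal.ofReal_lt_ofReal_iff hc).1 this

lemma fatou_aux (hρ : ρ {z : ℂ | ‖z‖ = 1}ᶜ = 0) (s : ℕ → ℝ)
    (hs0 : ∀ n, 0 < s n) (hs1 : ∀ n, s n < 1) (hlim : Tendsto s atTop (nhds 1)) :
    gT ρ θ ≤ liminf (fun n => ENNReal.ofReal (GT ρ (s n) θ)) atTop := by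
  set e : ℂ := Complex.exp ((θ:ℂ) * Complex.I) with he
  set Fn : ℕ → ℂ → ℝ≥0∞ := fun n ζ => ENNReal.ofReal ((s n ^ 2 - 1) / Real.log (s n) *
      (1 / ‖ζ - (s n : ℂ) * e‖ ^ 2)) with hFn
  have hmeas : ∀ n, Measurable (Fn n) :=
    fun n => (((meas_f ((s n : ℂ) * e)).const_mul _)).ennreal_ofReal
  have hsA : Tendsto (fun n => (s n ^ 2 - 1) / Real.log (s n)) atTop (nhds 2) := by
    apply tendsto_A.comp
    rw [tendsto_nhdsWithin_iff]
    exact ⟨hlim, Eventually.of_forall fun n => (hs1 n).ne⟩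
  have hptw : ∀ ζ : ℂ, ‖ζ‖ = 1 →
      Tendsto (fun n => Fn n ζ) atTop
        (nhds (2 * (ENNReal.ofReal (‖ζ - e‖ ^ 2))⁻¹)) := by
    intro ζ hζ
    rcases eq_or_ne (‖ζ - e‖) 0 with habs | habs
    · -- ζ = e
      have hζe : ζ = e := by simpa [sub_eq_zero] using habs
      have habs2 : ‖ζ - e‖ ^ 2 = 0 := by rw [habs]; ring
      rw [habs2, ENNReal.ofReal_zero, ENNReal.inv_zero, ENNReal.mul_top (by norm_num)]
      have habsn : ∀ n, ‖ζ - (s n : ℂ) * e‖ ^ 2 = (1 - s n) ^ 2 := by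
        intro n
        rw [hζe, show e - (s n : ℂ) * e = ((1 - s n : ℝ) : ℂ) * e by push_cast; ring,
          norm_mul, Complex.norm_real, Real.norm_eq_abs, he, Complex.norm_exp_ofReal_mul_I, mul_one, sq_abs]
      have h0' : Tendsto (fun n => (1 - s n) ^ 2) atTop (nhdsWithin 0 (Set.Ioi 0)) := by
        rw [tendsto_nhdsWithin_iff]
        constructor
        · have h1' : Tendsto (fun n => 1 - s n) atTop (nhds (1 - 1)) :=
            tendsto_const_nhds.sub hlim
          rw [sub_self] at h1'
          simpa using h1'.pow 2
        · exact Eventually.of_forall fun n => pow_pos (sub_pos.2 (hs1 n)) 2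
      have hinv : Tendsto (fun n => 1 / ‖ζ - (s n : ℂ) * e‖ ^ 2) atTop atTop := by
        simp only [habsn, one_div]
        exact h0'.inv_tendsto_nhdsGT_zero
      have hf : Tendsto (fun n => (s n ^ 2 - 1) / Real.log (s n) *
          (1 / ‖ζ - (s n : ℂ) * e‖ ^ 2)) atTop atTop :=
        Tendsto.pos_mul_atTop (by norm_num) hsA hinv
      exact ENNReal.tendsto_ofReal_atTop.comp hf
    · have hspos : 0 < ‖ζ - e‖ ^ 2 := by positivity
      have hcont : Tendsto (fun n => 1 / ‖ζ - (s n : ℂ) * e‖ ^ 2) atTop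
          (nhds (1 / ‖ζ - e‖ ^ 2)) := by
        have hc : ContinuousAt (fun x : ℝ => 1 / ‖ζ - (x : ℂ) * e‖ ^ 2) 1 := by
          apply ContinuousAt.div continuousAt_const
          · exact ((continuous_norm.comp (continuous_const.sub
              ((Complex.continuous_ofReal.mul continuous_const)))).pow 2).continuousAt
          · simpa using pow_ne_zero 2 habs
        have := hc.tendsto.comp hlim
        simpa [Function.comp_def] using this
      have hmul : Tendsto (fun n => (s n ^ 2 - 1) / Real.log (s n) *
          (1 / ‖ζ - (s n : ℂ) * e‖ ^ 2)) atTop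
          (nhds (2 * (1 / ‖ζ - e‖ ^ 2))) := hsA.mul hcont
      have h7 : ENNReal.ofReal (2 * (1 / ‖ζ - e‖ ^ 2))
          = 2 * (ENNReal.ofReal (‖ζ - e‖ ^ 2))⁻¹ := by
        rw [ENNReal.ofReal_mul (by norm_num), one_div,
          ENNReal.ofReal_inv_of_pos hspos, ENNReal.ofReal_ofNat]
      rw [← h7]
      exact (ENNReal.continuous_ofReal.tendsto _).comp hmul
  have hae : ∀ᵐ ζ ∂ρ, 2 * (ENNReal.ofReal (‖ζ - e‖ ^ 2))⁻¹
      = liminf (fun n => Fn n ζ) atTop := by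
    filter_upwards [ae_circle hρ] with ζ hζ
    exact ((hptw ζ hζ).liminf_eq).symm
  calc gT ρ θ = ∫⁻ ζ, 2 * (ENNReal.ofReal (‖ζ - e‖ ^ 2))⁻¹ ∂ρ := gT_eq
    _ = ∫⁻ ζ, liminf (fun n => Fn n ζ) atTop ∂ρ := lintegral_congr_ae hae
    _ ≤ liminf (fun n => ∫⁻ ζ, Fn n ζ ∂ρ) atTop := lintegral_liminf_le hmeas
    _ = liminf (fun n => ENNReal.ofReal (GT ρ (s n) θ)) atTop := by
        apply liminf_congr  -- name?
        exact Eventually.of_forall fun n => (ofReal_GT hρ (hs0 n) (hs1 n)).symm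

lemma contG (hρ : ρ {z : ℂ | ‖z‖ = 1}ᶜ = 0) {R : ℝ} (h0 : 0 < R) (h1 : R < 1) :
    ContinuousAt (fun r => GT ρ r θ) R := by
  have hlog : Real.log R ≠ 0 := (Real.log_neg h0 h1).ne
  have hA : ContinuousAt (fun r : ℝ => (r ^ 2 - 1) / Real.log r) R :=
    ContinuousAt.div (by fun_prop) (Real.continuousAt_log h0.ne') hlog
  set r₁ : ℝ := (1 + R) / 2 with hr₁
  have hRr₁ : R < r₁ := by rw [hr₁]; linarith
  have hr₁1 : r₁ < 1 := by rw [hr₁]; linarith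
  have hI : ContinuousAt (fun r : ℝ =>
      ∫ ζ : ℂ, 1 / ‖ζ - (r : ℂ) * Complex.exp ((θ : ℂ) * Complex.I)‖ ^ 2 ∂ρ) R := by
    apply continuousAt_of_dominated (bound := fun _ : ℂ => ((1 - r₁) ^ 2)⁻¹)
    · exact Eventually.of_forall fun r => (meas_f _).aestronglyMeasurable
    · have hmem : Set.Ioo 0 r₁ ∈ nhds R := Ioo_mem_nhds h0 hRr₁
      filter_upwards [hmem] with r hr
      filter_upwards [ae_circle hρ] with ζ hζ
      rw [Real.norm_eq_abs, abs_of_nonneg (by positivity)]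
      calc 1 / ‖ζ - (r : ℂ) * Complex.exp ((θ : ℂ) * Complex.I)‖ ^ 2
          ≤ ((1 - r) ^ 2)⁻¹ := f_le hr.1 (hr.2.trans hr₁1) ζ hζ
        _ ≤ ((1 - r₁) ^ 2)⁻¹ := by
            apply inv_anti₀ (pow_pos (by linarith) 2)
            nlinarith [hr.2]
    · exact integrable_const _
    · filter_upwards [ae_circle hρ] with ζ hζ
      apply ContinuousAt.div continuousAt_const
      · exact ((continuous_norm.comp (continuous_const.sub
          (Complex.continuous_ofReal.mul continuous_const))).pow 2).continuousAt
      · have := abs_ge h1 h0.le ζ hζ (θ := θ)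
        have hpos : 0 < ‖ζ - (R : ℂ) * Complex.exp ((θ : ℂ) * Complex.I)‖ := by
          linarith
        positivity
  exact hA.mul hI

end LG16

open LG16 in
theorem stmt16 (ρ : Measure ℂ) [IsFiniteMeasure ρ]
    (hρ : ρ {z : ℂ | ‖z‖ = 1}ᶜ = 0)
    (t : ℝ) (ht : 1 < t) (θ : ℝ) (hθ : θ ∈ Set.Icc (-Real.pi) Real.pi) :
    ({r : ℝ | r ∈ Set.Ioo (0 : ℝ) 1 ∧ GT ρ r θ < 1 / (t - 1)}).Nonempty ∧
    (0 < RT ρ t θ ∧ RT ρ t θ ≤ 1) ∧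
    (RT ρ t θ < 1 ↔ ENNReal.ofReal (1 / (t - 1)) < gT ρ θ) ∧
    (RT ρ t θ < 1 → GT ρ (RT ρ t θ) θ = 1 / (t - 1)) := by
  have hc : 0 < 1 / (t - 1) := div_pos one_pos (by linarith)
  set S : Set ℝ := {r : ℝ | r ∈ Set.Ioo (0 : ℝ) 1 ∧ GT ρ r θ < 1 / (t - 1)} with hSdef
  have hRT : RT ρ t θ = sSup S := rfl
  -- Nonemptiness
  set M : ℝ := (ρ Set.univ).toReal with hM
  have hM0 : 0 ≤ M := ENNReal.toReal_nonneg
  obtain ⟨N, hN⟩ := exists_nat_gt (4 * M / (1 / (t - 1)))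
  set n : ℕ := N + 1 with hn
  have hn0 : (0:ℝ) < n := by positivity
  have hnN : 4 * M / (1 / (t - 1)) < (n:ℝ) := by
    refine hN.trans_le ?_
    exact_mod_cast Nat.le_succ N
  set r0 : ℝ := Real.exp (-(n:ℝ)) with hr0
  have hr0pos : 0 < r0 := Real.exp_pos _
  have hr0lt : r0 < 1 := by
    rw [hr0]
    exact Real.exp_lt_one_iff.mpr (by linarith)
  have hr0half : r0 ≤ 1/2 := by
    have h1 : r0 ≤ Real.exp (-1) := Real.exp_le_exp.2 (by norm_num; linarith [hn0])
    have h2 : (2:ℝ) ≤ Real.exp 1 := by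
      have := Real.add_one_le_exp (1:ℝ)
      linarith
    have h3 : Real.exp (-1) ≤ 1/2 := by
      rw [Real.exp_neg]
      rw [inv_le_comm₀ (Real.exp_pos 1) (by norm_num)]
      simpa using h2
    linarith
  have hGr0 : GT ρ r0 θ < 1 / (t - 1) := by
    have hlog : Real.log r0 = -(n:ℝ) := by rw [hr0]; exact Real.log_exp _
    have hA : (r0^2 - 1) / Real.log r0 ≤ 1/(n:ℝ) := by
      rw [hlog, div_neg, ← neg_div]
      gcongr
      nlinarith [hr0pos]
    have hApos : 0 < (r0^2 - 1) / Real.log r0 :=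
      div_pos_of_neg_of_neg (by nlinarith) (Real.log_neg hr0pos hr0lt)
    have hIle : (∫ ζ : ℂ, 1 / ‖ζ - (r0 : ℂ) *
        Complex.exp ((θ : ℂ) * Complex.I)‖ ^ 2 ∂ρ) ≤ M * 4 := by
      have h1 : (∫ ζ : ℂ, 1 / ‖ζ - (r0 : ℂ) *
          Complex.exp ((θ : ℂ) * Complex.I)‖ ^ 2 ∂ρ) ≤ ∫ _ : ℂ, (4:ℝ) ∂ρ := by
        apply integral_mono_ae (integrable_f hρ hr0pos hr0lt) (integrable_const 4)
        filter_upwards [ae_circle hρ] with ζ hζ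
        calc 1 / ‖ζ - (r0 : ℂ) * Complex.exp ((θ : ℂ) * Complex.I)‖ ^ 2
            ≤ ((1 - r0) ^ 2)⁻¹ := f_le hr0pos hr0lt ζ hζ
          _ ≤ ((1/2 : ℝ)^2)⁻¹ := by
              apply inv_anti₀ (by positivity)
              nlinarith
          _ ≤ 4 := by norm_num
      rw [integral_const] at h1
      simpa [smul_eq_mul, hM, measureReal_def] using h1
    have hInn : 0 ≤ ∫ ζ : ℂ, 1 / ‖ζ - (r0 : ℂ) *
        Complex.exp ((θ : ℂ) * Complex.I)‖ ^ 2 ∂ρ :=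
      integral_nonneg (fun ζ => by positivity)
    have hle : GT ρ r0 θ ≤ (1/(n:ℝ)) * (M * 4) :=
      mul_le_mul hA hIle hInn (by positivity)
    have hfin : (1/(n:ℝ)) * (M * 4) < 1 / (t - 1) := by
      rw [div_lt_iff₀ hc] at hnN
      rw [one_div, inv_mul_eq_div, div_lt_iff₀ hn0]
      nlinarith
    linarith
  have hne : S.Nonempty := ⟨r0, ⟨hr0pos, hr0lt⟩, hGr0⟩
  have hbdd : BddAbove S := ⟨1, fun x hx => hx.1.2.le⟩
  have hRpos : 0 < RT ρ t θ := by
    rw [hRT]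
    exact lt_of_lt_of_le hr0pos (le_csSup hbdd ⟨⟨hr0pos, hr0lt⟩, hGr0⟩)
  have hRle : RT ρ t θ ≤ 1 := by
    rw [hRT]
    exact csSup_le hne (fun x hx => hx.1.2.le)
  have hiff : RT ρ t θ < 1 ↔ ENNReal.ofReal (1 / (t - 1)) < gT ρ θ := by
    constructor
    · intro hR1
      by_contra hgle
      push_neg at hgle
      have hSeq : S = Set.Ioo 0 1 := by
        ext x
        exact ⟨fun h => h.1, fun h => ⟨h, Glt hρ hc hgle h.1 h.2⟩⟩
      rw [hRT, hSeq, csSup_Ioo one_pos] at hR1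
      exact lt_irrefl 1 hR1
    · intro hgt
      by_contra hR1
      push_neg at hR1
      have hex : ∀ m : ℕ, ∃ x ∈ S, 1 - 1/((m:ℝ)+1) < x := by
        intro m
        apply exists_lt_of_lt_csSup hne
        rw [← hRT]
        have : 0 < 1/((m:ℝ)+1) := by positivity
        linarith
      choose s hsS hslt using hex
      have hs0 : ∀ m, 0 < s m := fun m => (hsS m).1.1
      have hs1 : ∀ m, s m < 1 := fun m => (hsS m).1.2
      have hlim : Tendsto s atTop (nhds 1) := by
        apply tendsto_of_tendsto_of_tendsto_of_le_of_le
          (g := fun m : ℕ => 1 - 1/((m:ℝ)+1)) (h := fun _ : ℕ => (1:ℝ))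
        · have h2 : Tendsto (fun _ : ℕ => (1:ℝ)) atTop (nhds 1) := tendsto_const_nhds
          have h3 := h2.sub tendsto_one_div_add_atTop_nhds_zero_nat
          simpa using h3
        · exact tendsto_const_nhds
        · exact fun m => (hslt m).le
        · exact fun m => (hs1 m).le
      have hfat := fatou_aux (θ := θ) hρ s hs0 hs1 hlim
      have hub : liminf (fun m => ENNReal.ofReal (GT ρ (s m) θ)) atTop
          ≤ ENNReal.ofReal (1 / (t - 1)) := by
        apply liminf_le_of_frequently_le'
        exact (Eventually.of_forall fun m =>
          ENNReal.ofReal_le_ofReal ((hsS m).2.le)).frequently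
      exact absurd hgt (not_lt.2 (hfat.trans hub))
  refine ⟨hne, ⟨hRpos, hRle⟩, hiff, ?_⟩
  intro hR1
  have hcont := contG hρ hRpos hR1 (θ := θ)
  have hforall : ∀ x, RT ρ t θ < x → x < 1 → 1 / (t - 1) ≤ GT ρ x θ := by
    intro x hRx hx1
    by_contra h
    push_neg at h
    have hxS : x ∈ S := ⟨⟨hRpos.trans hRx, hx1⟩, h⟩
    have := le_csSup hbdd hxS
    rw [← hRT] at this
    linarith
  have h1 : 1 / (t - 1) ≤ GT ρ (RT ρ t θ) θ := by
    have htd : Tendsto (fun x => GT ρ x θ) (nhdsWithin (RT ρ t θ) (Set.Ioi (RT ρ t θ)))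
        (nhds (GT ρ (RT ρ t θ) θ)) := hcont.tendsto.mono_left nhdsWithin_le_nhds
    apply ge_of_tendsto htd
    filter_upwards [Ioo_mem_nhdsGT_of_mem ⟨le_refl (RT ρ t θ), hR1⟩] with x hx
    exact hforall x hx.1 hx.2
  have h2 : GT ρ (RT ρ t θ) θ ≤ 1 / (t - 1) := by
    have hex2 : ∀ m : ℕ, ∃ x ∈ S, RT ρ t θ - 1/((m:ℝ)+1) < x := by
      intro m
      apply exists_lt_of_lt_csSup hne
      rw [← hRT]
      have : 0 < 1/((m:ℝ)+1) := by positivity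
      linarith
    choose s hsS hslt using hex2
    have hsleR : ∀ m, s m ≤ RT ρ t θ := by
      intro m
      rw [hRT]
      exact le_csSup hbdd (hsS m)
    have hlim : Tendsto s atTop (nhds (RT ρ t θ)) := by
      apply tendsto_of_tendsto_of_tendsto_of_le_of_le
        (g := fun m : ℕ => RT ρ t θ - 1/((m:ℝ)+1)) (h := fun _ : ℕ => RT ρ t θ)
      · have h2' : Tendsto (fun _ : ℕ => RT ρ t θ) atTop (nhds (RT ρ t θ)) :=
          tendsto_const_nhds
        have h3 := h2'.sub tendsto_one_div_add_atTop_nhds_zero_nat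
        simpa using h3
      · exact tendsto_const_nhds
      · exact fun m => (hslt m).le
      · exact hsleR
    have htd2 : Tendsto (fun m => GT ρ (s m) θ) atTop (nhds (GT ρ (RT ρ t θ) θ)) :=
      hcont.tendsto.comp hlim
    exact le_of_tendsto htd2 (Eventually.of_forall fun m => ((hsS m).2).le)
  linarith
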